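/- Let (X,d_X) be a metric space, (Y,ρ_Y) a quasi-metric space (ρ_Y nonnegative, symmetric, vanishing on the diagonal), S ⊆ X a closed subset with X \ S finite of cardinality m, and f : S → Y a Lipschitz map with Lipschitz constant Lip(f). Then for every ε > 0 there exists an extension F : X → Y of f with ρ_Y(F(x),F(x')) ≤ ((1+ε)m+1)·Lip(f)·d_X(x,x') for all x,x' ∈ X. -/

import Mathlib

namespace LipExtAux

open Metric List

variable {X : Type*} [MetricSpace X]

/-- Substitution: replace the point `p.1` by `p.2`, identity elsewhere. -/
noncomputable def swp (p : X × X) (x : X) : X :=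
  @ite _ (x = p.1) (Classical.propDecidable _) p.2 x

lemma swp_pos {p : X × X} {x : X} (h : x = p.1) : swp p x = p.2 := if_pos h

lemma swp_neg {p : X × X} {x : X} (h : x ≠ p.1) : swp p x = x := if_neg h

/-- Iterated substitution along a list of (point, parent) pairs;
the list is in chronological order, parents having been introduced earlier. -/
noncomputable def sig : List (X × X) → X → X
  | [], x => x
  | p :: l, x => swp p (sig l x)

/-- The chain of edges followed by `x` (in reverse chronological order). -/
noncomputable def chn : List (X × X) → X → List (X × X)
  | [], _ => []
  | p :: l, x => chn l x ++ (@ite _ (sig l x = p.1) (Classical.propDecidable _) [p] [])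

lemma sig_cons (p : X × X) (l : List (X × X)) (x : X) :
    sig (p :: l) x = swp p (sig l x) := rfl

lemma chn_cons (p : X × X) (l : List (X × X)) (x : X) :
    chn (p :: l) x
      = chn l x ++ (@ite _ (sig l x = p.1) (Classical.propDecidable _) [p] []) := rfl

/-- Greedy (Prim-style) construction record: each step picks a point `u` outside
the current set `S` and a parent `w ∈ S`, with `dist u w` within a factor `1+δ`
of the global minimum over all crossing pairs. -/
inductive Good (δ : ℝ) : Set X → List (X × X) → Prop where
  | nil : ∀ S : Set X, Sᶜ = (∅ : Set X) → Good δ S []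
  | cons : ∀ (S : Set X) (u w : X) (l : List (X × X)), u ∉ S → w ∈ S →
      (∀ u', u' ∉ S → ∀ w' ∈ S, dist u w ≤ (1 + δ) * dist u' w') →
      Good δ (S ∪ {u}) l → Good δ S ((u, w) :: l)

lemma good_sig_id {δ : ℝ} {S : Set X} {l : List (X × X)} (h : Good δ S l) :
    ∀ s ∈ S, sig l s = s := by
  induction h with
  | nil S h => intro s _; rfl
  | cons S u w l hu hw hmin htail ih =>
      intro s hs
      have h1 : sig l s = s := ih s (Set.mem_union_left _ hs)
      rw [sig_cons, h1, swp_neg]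
      rintro rfl; exact hu hs

lemma good_sig_mem {δ : ℝ} {S : Set X} {l : List (X × X)} (h : Good δ S l) :
    ∀ x, sig l x ∈ S := by
  induction h with
  | nil S h =>
      intro x
      have : S = Set.univ := by rwa [Set.compl_empty_iff] at h
      rw [this]; trivial
  | cons S u w l hu hw hmin htail ih =>
      intro x
      rcases ih x with h1 | h1
      · rw [sig_cons, swp_neg]
        · exact h1
        · rintro h2; rw [h2] at h1; exact hu h1
      · rw [sig_cons, swp_pos (by simpa using h1)]
        exact hw

lemma good_chn {δ : ℝ} {S : Set X} {l : List (X × X)} (h : Good δ S l) :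
    ∀ x, (∀ z ∈ (chn l x).map Prod.fst, z ∉ S) ∧ ((chn l x).map Prod.fst).Nodup := by
  induction h with
  | nil S h => intro x; simp [chn]
  | cons S u w l hu hw hmin htail ih =>
      intro x
      obtain ⟨ihmem, ihnd⟩ := ih x
      have hnu : ∀ z ∈ (chn l x).map Prod.fst, z ≠ u := by
        intro z hz hzu
        exact ihmem z hz (Set.mem_union_right _ (by simp [hzu]))
      have hnS : ∀ z ∈ (chn l x).map Prod.fst, z ∉ S := by
        intro z hz hzS
        exact ihmem z hz (Set.mem_union_left _ hzS)
      rw [chn_cons]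
      by_cases hc : sig l x = u
      · rw [if_pos hc]
        constructor
        · intro z hz
          rcases List.mem_map.mp hz with ⟨e, he, rfl⟩
          rcases List.mem_append.mp he with he | he
          · exact hnS _ (List.mem_map_of_mem he)
          · simp only [List.mem_singleton] at he
            rw [he]; exact hu
        · rw [List.map_append]
          refine List.Nodup.append ihnd (by simp) ?_
          intro z hz hz2
          simp at hz2
          exact hnu z hz hz2
      · rw [if_neg hc, List.append_nil]
        exact ⟨hnS, ihnd⟩

lemma good_chn_nil {δ : ℝ} {S : Set X} {l : List (X × X)} (h : Good δ S l) :
    ∀ x, chn l x = [] → sig l x = x := by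
  induction h with
  | nil S h => intro x _; rfl
  | cons S u w l hu hw hmin htail ih =>
      intro x hx
      rw [chn_cons] at hx
      rcases List.append_eq_nil_iff.mp hx with ⟨h1, h2⟩
      have hc : sig l x ≠ u := by
        intro hc; rw [if_pos hc] at h2; exact absurd h2 (by simp)
      have h3 : sig l x = x := ih x h1
      rw [sig_cons, h3, swp_neg]
      rw [h3] at hc; exact hc

lemma good_chn_last {δ : ℝ} {S : Set X} {l : List (X × X)} (h : Good δ S l) :
    ∀ x, chn l x ≠ [] → ∃ z, (z, sig l x) ∈ chn l x := by
  induction h with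
  | nil S h => intro x hx; exact absurd rfl hx
  | cons S u w l hu hw hmin htail ih =>
      intro x hx
      by_cases hc : sig l x = u
      · refine ⟨u, ?_⟩
        rw [chn_cons, if_pos hc, sig_cons, swp_pos hc]
        simp
      · rw [chn_cons, if_neg hc, List.append_nil] at hx ⊢
        rw [sig_cons, swp_neg hc]
        exact ih x hx

lemma good_sig_merge {δ : ℝ} {S : Set X} {l : List (X × X)} (h : Good δ S l) :
    ∀ x z, z ∈ (chn l x).map Prod.fst → sig l x = sig l z := by
  induction h with
  | nil S h => intro x z hz; simp [chn] at hz
  | cons S u w l hu hw hmin htail ih =>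
      intro x z hz
      rw [chn_cons, List.map_append] at hz
      rcases List.mem_append.mp hz with hz | hz
      · rw [sig_cons, sig_cons, ih x z hz]
      · by_cases hc : sig l x = u
        · rw [if_pos hc] at hz
          simp only [List.map_cons, List.map_nil, List.mem_singleton] at hz
          have h1 : sig l u = u :=
            good_sig_id htail u (Set.mem_union_right _ (by simp))
          rw [sig_cons, sig_cons, hz, hc, h1]
        · rw [if_neg hc] at hz; simp at hz

lemma good_chn_sum {δ : ℝ} {S : Set X} {l : List (X × X)} (h : Good δ S l) :
    ∀ x, dist x (sig l x) ≤ ((chn l x).map (fun p => dist p.1 p.2)).sum := by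
  induction h with
  | nil S h => intro x; simp [chn, sig]
  | cons S u w l hu hw hmin htail ih =>
      intro x
      rw [chn_cons]
      by_cases hc : sig l x = u
      · rw [if_pos hc, sig_cons, swp_pos hc, List.map_append, List.sum_append]
        simp only [List.map_cons, List.map_nil, List.sum_cons, List.sum_nil, add_zero]
        have ihx := ih x
        rw [hc] at ihx
        calc dist x w ≤ dist x u + dist u w := dist_triangle _ _ _
          _ ≤ ((chn l x).map (fun p => dist p.1 p.2)).sum + dist u w :=
              by linarith
      · rw [if_neg hc, List.append_nil, sig_cons, swp_neg hc]
        exact ih x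

/-- The cut bound: if the chains of `a` and `b` are disjoint, every edge on the
chain of `a` has length at most `(1+δ)^(length) * dist a b`. -/
lemma good_cut {δ : ℝ} (hδ : 0 ≤ δ) {S : Set X} {l : List (X × X)} (h : Good δ S l) :
    ∀ a b : X, ((chn l a).map Prod.fst).Disjoint ((chn l b).map Prod.fst) →
      ∀ e ∈ chn l a, dist e.1 e.2 ≤ (1 + δ) ^ l.length * dist a b := by
  induction h with
  | nil S h => intro a b _ e he; simp [chn] at he
  | cons S u w l hu hw hmin htail ih =>
      intro a b hdis e he
      have h1δ : (1 : ℝ) ≤ 1 + δ := by linarith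
      have hpow : ∀ n : ℕ, (0:ℝ) ≤ (1+δ)^n := fun n => pow_nonneg (by linarith) n
      have hsubA : (chn l a).map Prod.fst ⊆ (chn ((u,w) :: l) a).map Prod.fst := by
        rw [chn_cons, List.map_append]; exact List.subset_append_left _ _
      have hsubB : (chn l b).map Prod.fst ⊆ (chn ((u,w) :: l) b).map Prod.fst := by
        rw [chn_cons, List.map_append]; exact List.subset_append_left _ _
      have hdis' : ((chn l a).map Prod.fst).Disjoint ((chn l b).map Prod.fst) :=
        fun z hz1 hz2 => hdis (hsubA hz1) (hsubB hz2)
      rw [chn_cons] at he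
      rcases List.mem_append.mp he with he | he
      · -- old edge
        refine (ih a b hdis' e he).trans ?_
        have : (1+δ) ^ l.length ≤ (1+δ) ^ (l.length + 1) :=
          pow_le_pow_right₀ h1δ (Nat.le_succ _)
        simpa [List.length_cons] using
          mul_le_mul_of_nonneg_right this dist_nonneg
      · -- new edge (u, w), appended since sig l a = u
        by_cases hc : sig l a = u
        swap
        · rw [if_neg hc] at he; simp at he
        rw [if_pos hc] at he
        simp at he
        subst he
        -- a is not in S
        have haS : a ∉ S := by
          intro haS
          have := good_sig_id htail a (Set.mem_union_left _ haS)
          rw [this] at hc; rw [hc] at haS; exact hu haS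
        have hlen : ((u,w) :: l).length = l.length + 1 := rfl
        by_cases hbS : b ∈ S
        · -- crossing pair (a, b)
          have h2 : dist u w ≤ (1+δ) * dist a b := hmin a haS b hbS
          refine h2.trans ?_
          rw [hlen]
          have : (1+δ) * dist a b = (1+δ)^1 * dist a b := by ring
          rw [this]
          exact mul_le_mul_of_nonneg_right
            (pow_le_pow_right₀ h1δ (by omega)) dist_nonneg
        · -- b outside S; look at the last edge of b's chain
          have hσb : sig l b ∈ S ∪ {u} := good_sig_mem htail b
          by_cases hbu : sig l b = u
          · -- chains would share the vertex u
            exfalso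
            have hmemA : u ∈ (chn ((u,w) :: l) a).map Prod.fst := by
              rw [chn_cons, if_pos hc, List.map_append]
              simp
            have hmemB : u ∈ (chn ((u,w) :: l) b).map Prod.fst := by
              rw [chn_cons, if_pos hbu, List.map_append]
              simp
            exact hdis hmemA hmemB
          have hσbS : sig l b ∈ S := by
            rcases hσb with h2 | h2
            · exact h2
            · exact absurd (by simpa using h2) hbu
          have hbne : chn l b ≠ [] := by
            intro hemp
            rw [good_chn_nil htail b hemp] at hσbS
            exact hbS hσbS
          obtain ⟨z, hz⟩ := good_chn_last htail b hbne
          have hzfst : z ∈ (chn l b).map Prod.fst := by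
            exact List.mem_map.mpr ⟨(z, sig l b), hz, rfl⟩
          have hznS : z ∉ S := by
            intro hzS
            exact (good_chn htail b).1 z hzfst (Set.mem_union_left _ hzS)
          have hzedge : dist z (sig l b) ≤ (1+δ) ^ l.length * dist b a :=
            ih b a (fun x h1 h2 => hdis' h2 h1) (z, sig l b) hz
          have h2 : dist u w ≤ (1+δ) * dist z (sig l b) := hmin z hznS _ hσbS
          refine h2.trans ?_
          rw [dist_comm b a] at hzedge
          rw [hlen]
          calc (1+δ) * dist z (sig l b) ≤ (1+δ) * ((1+δ) ^ l.length * dist a b) :=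
                mul_le_mul_of_nonneg_left hzedge (by linarith)
            _ = (1+δ) ^ (l.length + 1) * dist a b := by ring

/-- Main distance bound for the retraction `sig l`. -/
lemma good_sig_dist {δ : ℝ} (hδ : 0 ≤ δ) {S : Set X} {l : List (X × X)}
    (h : Good δ S l) (hfin : (Sᶜ : Set X).Finite) {m : ℕ}
    (hm : hfin.toFinset.card = m) (hlen : l.length = m) (a b : X) :
    dist (sig l a) (sig l b) ≤ (1 + (m : ℝ) * (1+δ)^m) * dist a b := by
  classical
  have hd : (0:ℝ) ≤ dist a b := dist_nonneg
  have hM : (0:ℝ) ≤ (1+δ)^m := pow_nonneg (by linarith) m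
  have hRHS : (0:ℝ) ≤ (1 + (m : ℝ) * (1+δ)^m) * dist a b := by positivity
  by_cases hdis : ((chn l a).map Prod.fst).Disjoint ((chn l b).map Prod.fst)
  · have hcutA := good_cut hδ h a b hdis
    have hcutB := good_cut hδ h b a (fun z h1 h2 => hdis h2 h1)
    have hsumA : dist a (sig l a) ≤ ((chn l a).length : ℝ) * ((1+δ)^m * dist a b) := by
      refine (good_chn_sum h a).trans ?_
      have hb : ∀ r ∈ (chn l a).map (fun p => dist p.1 p.2), r ≤ (1+δ)^m * dist a b := by
        intro r hr
        rcases List.mem_map.mp hr with ⟨e, he, rfl⟩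
        simpa [hlen] using hcutA e he
      have := List.sum_le_card_nsmul _ _ hb
      simpa [List.length_map, nsmul_eq_mul] using this
    have hsumB : dist b (sig l b) ≤ ((chn l b).length : ℝ) * ((1+δ)^m * dist a b) := by
      refine (good_chn_sum h b).trans ?_
      have hb : ∀ r ∈ (chn l b).map (fun p => dist p.1 p.2), r ≤ (1+δ)^m * dist a b := by
        intro r hr
        rcases List.mem_map.mp hr with ⟨e, he, rfl⟩
        have := hcutB e he
        rw [dist_comm b a] at this
        simpa [hlen] using this
      have := List.sum_le_card_nsmul _ _ hb
      simpa [List.length_map, nsmul_eq_mul] using this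
    -- counting: the chains use at most m distinct complement points
    have hndA := (good_chn h a).2
    have hndB := (good_chn h b).2
    have hnsA := (good_chn h a).1
    have hnsB := (good_chn h b).1
    have hnodup : ((chn l a).map Prod.fst ++ (chn l b).map Prod.fst).Nodup :=
      List.Nodup.append hndA hndB hdis
    have hsubfin : ((chn l a).map Prod.fst ++ (chn l b).map Prod.fst).toFinset ⊆ hfin.toFinset := by
      intro z hz
      rw [List.mem_toFinset, List.mem_append] at hz
      rw [Set.Finite.mem_toFinset]
      rcases hz with hz | hz
      · exact hnsA z hz
      · exact hnsB z hz
    have hcount : (chn l a).length + (chn l b).length ≤ m := by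
      have h1 : ((chn l a).map Prod.fst ++ (chn l b).map Prod.fst).toFinset.card
          = (chn l a).length + (chn l b).length := by
        rw [List.toFinset_card_of_nodup hnodup, List.length_append,
          List.length_map, List.length_map]
      have h2 := Finset.card_le_card hsubfin
      rw [h1, hm] at h2
      exact h2
    have hcountR : ((chn l a).length : ℝ) + ((chn l b).length : ℝ) ≤ (m : ℝ) := by
      exact_mod_cast hcount
    have htri : dist (sig l a) (sig l b)
        ≤ dist (sig l a) a + dist a b + dist b (sig l b) := dist_triangle4 _ _ _ _
    rw [dist_comm (sig l a) a] at htri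
    have hA0 : (0:ℝ) ≤ ((chn l a).length : ℝ) := Nat.cast_nonneg _
    have hB0 : (0:ℝ) ≤ ((chn l b).length : ℝ) := Nat.cast_nonneg _
    nlinarith [mul_nonneg hM hd]
  · -- chains intersect: the retractions agree
    rw [List.disjoint_left] at hdis
    push_neg at hdis
    obtain ⟨z, hzA, hzB⟩ := hdis
    have h1 : sig l a = sig l z := good_sig_merge h a z hzA
    have h2 : sig l b = sig l z := good_sig_merge h b z hzB
    rw [h1, h2, dist_self]
    exact hRHS

/-- Existence of the greedy construction. -/
lemma prim_exists (δ : ℝ) (hδ : 0 < δ) :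
    ∀ (n : ℕ) (S : Set X), IsClosed S → S.Nonempty →
      ∀ hfin : (Sᶜ : Set X).Finite, hfin.toFinset.card = n →
      ∃ l : List (X × X), Good δ S l ∧ l.length = n := by
  classical
  intro n
  induction n with
  | zero =>
      intro S hcl hne hfin hcard
      have h1 : hfin.toFinset = ∅ := Finset.card_eq_zero.mp hcard
      have h2 : Sᶜ = (∅ : Set X) := by
        rw [← Set.Finite.coe_toFinset hfin, h1]; simp
      exact ⟨[], Good.nil S h2, rfl⟩
  | succ k ih =>
      intro S hcl hne hfin hcard
      have hTne : hfin.toFinset.Nonempty := by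
        rw [← Finset.card_pos, hcard]; omega
      obtain ⟨u, huT, humin⟩ :=
        Finset.exists_min_image hfin.toFinset (fun u => infDist u S) hTne
      have huS : u ∉ S := by
        have := (Set.Finite.mem_toFinset hfin).mp huT
        simpa using this
      have hpos : 0 < infDist u S := (hcl.notMem_iff_infDist_pos hne).mp huS
      have hlt : infDist u S < (1 + δ) * infDist u S := by nlinarith
      obtain ⟨w, hwS, hw⟩ := (Metric.infDist_lt_iff hne).mp hlt
      set S' := S ∪ {u} with hS'
      have hcl' : IsClosed S' := hcl.union isClosed_singleton
      have hne' : S'.Nonempty := hne.mono Set.subset_union_left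
      have hcompl : S'ᶜ = Sᶜ \ {u} := by
        rw [hS', Set.compl_union]; rfl
      have hfin' : (S'ᶜ : Set X).Finite := by
        rw [hcompl]; exact hfin.diff
      have htf : hfin'.toFinset = hfin.toFinset.erase u := by
        ext z
        rw [Set.Finite.mem_toFinset, Finset.mem_erase, Set.Finite.mem_toFinset, hcompl]
        simp only [Set.mem_diff, Set.mem_singleton_iff]
        tauto
      have hcard' : hfin'.toFinset.card = k := by
        rw [htf, Finset.card_erase_of_mem huT, hcard]
        omega
      obtain ⟨l, hgood, hlen⟩ := ih S' hcl' hne' hfin' hcard'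
      refine ⟨(u, w) :: l, Good.cons S u w l huS hwS ?_ hgood, by simp [hlen]⟩
      intro u' hu' w' hw'
      have h1 : dist u w ≤ (1 + δ) * infDist u S := le_of_lt hw
      have h2 : infDist u S ≤ infDist u' S := by
        refine humin u' ?_
        rw [Set.Finite.mem_toFinset]
        simpa using hu'
      have h3 : infDist u' S ≤ dist u' w' := infDist_le_dist_of_mem hw'
      nlinarith

lemma pow_one_add_le {x : ℝ} (hx : 0 ≤ x) :
    ∀ m : ℕ, 2 * (m : ℝ) * x ≤ 1 → (1 + x) ^ m ≤ 1 + 2 * (m : ℝ) * x := by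
  intro m
  induction m with
  | zero => simp
  | succ k ih =>
      intro h
      have hk : 2 * (k : ℝ) * x ≤ 1 := by
        have : (k : ℝ) ≤ (k + 1 : ℕ) := by exact_mod_cast Nat.le_succ k
        push_cast at h ⊢
        nlinarith
      have h1 : (1 + x) ^ k ≤ 1 + 2 * (k : ℝ) * x := ih hk
      have h2 : (1 + x) ^ (k + 1) = (1 + x) ^ k * (1 + x) := pow_succ _ _
      have h3 : (0:ℝ) ≤ (1 + x) ^ k := pow_nonneg (by linarith) k
      push_cast
      push_cast at hk
      nlinarith

lemma exists_delta (m : ℕ) {ε : ℝ} (hε : 0 < ε) :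
    ∃ δ : ℝ, 0 < δ ∧ (1 + δ) ^ m ≤ 1 + ε := by
  have hden : (0:ℝ) < 2 * (m : ℝ) + 2 := by positivity
  have hminpos : (0:ℝ) < min ε 1 := lt_min hε one_pos
  refine ⟨min ε 1 / (2 * (m : ℝ) + 2), div_pos hminpos hden, ?_⟩
  set δ := min ε 1 / (2 * (m : ℝ) + 2) with hδdef
  have hδ0 : 0 ≤ δ := le_of_lt (div_pos hminpos hden)
  have hmul : δ * (2 * (m : ℝ) + 2) = min ε 1 := div_mul_cancel₀ _ (ne_of_gt hden)
  have hkey : 2 * (m : ℝ) * δ ≤ min ε 1 := by nlinarith [Nat.cast_nonneg (α := ℝ) m]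
  have h1 : 2 * (m : ℝ) * δ ≤ 1 := hkey.trans (min_le_right _ _)
  have h2 : 2 * (m : ℝ) * δ ≤ ε := hkey.trans (min_le_left _ _)
  calc (1 + δ) ^ m ≤ 1 + 2 * (m : ℝ) * δ := pow_one_add_le hδ0 m h1
    _ ≤ 1 + ε := by linarith

end LipExtAux


/-- **Lipschitz extension over finitely many points with quasi-metric target.**
If `S` is a closed subset of a metric space `X` whose complement is finite of
cardinality `m`, `ρ` is a quasi-metric on `Y` (nonnegative, symmetric, vanishing
on the diagonal), and `f : S → Y` satisfies `ρ (f a) (f b) ≤ L * dist a b`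
(with `L = Lip f`), then for every `ε > 0` there is an extension `F : X → Y`
with `ρ (F x) (F x') ≤ ((1+ε)*m+1) * L * dist x x'`. -/
theorem lipschitz_extension_finitely_many_points
    {X Y : Type*} [MetricSpace X] [Nonempty Y]
    (ρ : Y → Y → ℝ)
    (hρ_nonneg : ∀ a b, 0 ≤ ρ a b)
    (hρ_symm : ∀ a b, ρ a b = ρ b a)
    (hρ_diag : ∀ a, ρ a a = 0)
    (S : Set X) (hS_closed : IsClosed S)
    (hfin : (Sᶜ).Finite) (m : ℕ) (hm : hfin.toFinset.card = m)
    (f : S → Y) (L : ℝ) (hL : 0 ≤ L)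
    (hf : ∀ a b : S, ρ (f a) (f b) ≤ L * dist (a : X) (b : X))
    (ε : ℝ) (hε : 0 < ε) :
    ∃ F : X → Y, (∀ s : S, F s = f s) ∧
      ∀ x x' : X, ρ (F x) (F x') ≤ ((1 + ε) * m + 1) * L * dist x x' := by
  have hCnn : (0:ℝ) ≤ (1 + ε) * (m : ℝ) + 1 := by positivity
  by_cases hS : S.Nonempty
  · obtain ⟨δ, hδpos, hδpow⟩ := LipExtAux.exists_delta m hε
    obtain ⟨l, hgood, hlen⟩ :=
      LipExtAux.prim_exists δ hδpos m S hS_closed hS hfin hm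
    refine ⟨fun x => f ⟨LipExtAux.sig l x, LipExtAux.good_sig_mem hgood x⟩, ?_, ?_⟩
    · intro s
      have h1 : LipExtAux.sig l (s : X) = (s : X) :=
        LipExtAux.good_sig_id hgood s s.2
      show f ⟨LipExtAux.sig l (s : X), LipExtAux.good_sig_mem hgood (s : X)⟩ = f s
      congr 1
      exact Subtype.ext h1
    · intro x x'
      have hdist : dist (LipExtAux.sig l x) (LipExtAux.sig l x')
          ≤ (1 + (m : ℝ) * (1 + δ) ^ m) * dist x x' :=
        LipExtAux.good_sig_dist (le_of_lt hδpos) hgood hfin hm hlen x x'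
      have hd : (0:ℝ) ≤ dist x x' := dist_nonneg
      have hstep : (1 + (m : ℝ) * (1 + δ) ^ m) * dist x x'
          ≤ ((1 + ε) * (m : ℝ) + 1) * dist x x' := by
        have hmono : (m : ℝ) * (1 + δ) ^ m ≤ (m : ℝ) * (1 + ε) :=
          mul_le_mul_of_nonneg_left hδpow (Nat.cast_nonneg m)
        nlinarith
      calc ρ (f ⟨LipExtAux.sig l x, _⟩) (f ⟨LipExtAux.sig l x', _⟩)
          ≤ L * dist (LipExtAux.sig l x) (LipExtAux.sig l x') := hf _ _
        _ ≤ L * (((1 + ε) * (m : ℝ) + 1) * dist x x') := by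
            exact mul_le_mul_of_nonneg_left (hdist.trans hstep) hL
        _ = ((1 + ε) * (m : ℝ) + 1) * L * dist x x' := by ring
  · refine ⟨fun _ => Classical.arbitrary Y, ?_, ?_⟩
    · intro s
      exact absurd ⟨(s : X), s.2⟩ hS
    · intro x x'
      rw [hρ_diag]
      have h0 : (0:ℝ) ≤ ((1 + ε) * (m : ℝ) + 1) * L := mul_nonneg hCnn hL
      exact mul_nonneg h0 dist_nonneg
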